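/- Let H be a mesh, τ_1 →^p τ_2 a collective operation step between well-formed distributed types over H (where p is any of allGather(i), dynSlice(i,x), allToAll(i,j), or allPermute), and φ any device map. Then there is a corresponding low-level step ⟨φ, ⟦τ_1⟧_T⟩ ⇒^p ⟨φ, ⟦τ_2⟧_T⟩; that is, every high-level collective operation can be implemented by a low-level collective without changing the device map. -/

import Mathlib

/-! ## Meshes, index tuples, distributed dimensions and types -/

structure Mesh where
  axes : Finset String
  size : String → ℕ
  size_pos : ∀ x ∈ axes, 1 ≤ size x

def Mesh.hasAxis (H : Mesh) (x : String) (n : ℕ) : Prop :=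
  x ∈ H.axes ∧ H.size x = n

abbrev IndexTuple (H : Mesh) : Type :=
  {ι : String → ℕ // ∀ x : String, (x ∈ H.axes → ι x < H.size x) ∧ (x ∉ H.axes → ι x = 0)}

structure Dim where
  tile : ℕ
  axes : List String
  global : ℕ
deriving DecidableEq

abbrev DType := List Dim

def Mesh.WFDim (H : Mesh) (d : Dim) : Prop :=
  1 ≤ d.tile ∧ d.axes.Nodup ∧ (∀ x ∈ d.axes, x ∈ H.axes) ∧
    d.tile * (d.axes.map H.size).prod = d.global

def Mesh.WFType (H : Mesh) (τ : DType) : Prop :=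
  (∀ d ∈ τ, H.WFDim d) ∧ List.Pairwise (fun d e => ∀ x ∈ d.axes, x ∉ e.axes) τ

def globaltype (τ : DType) : List ℕ := τ.map Dim.global
def localtype (τ : DType) : List ℕ := τ.map Dim.tile
def localsize (τ : DType) : ℕ := (τ.map Dim.tile).prod

def typeAxes : DType → List String
  | [] => []
  | d :: τ => d.axes ++ typeAxes τ

/-- Base offset map of a distributed dimension, `⟦c{xs}n⟧_D`. -/
def dimOffset (H : Mesh) : ℕ → List String → (String → ℕ) → ℕ
  | _, [], _ => 0
  | c, x :: xs, ι => c * ι x + dimOffset H (c * H.size x) xs ι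

abbrev BOM (H : Mesh) : Type := IndexTuple H → List ℕ

/-- Base offset map of a distributed type, `⟦τ⟧_T`. -/
def typeOffset (H : Mesh) (τ : DType) : BOM H :=
  fun ι => τ.map (fun d => dimOffset H d.tile d.axes ι.val)

/-! ## Collective operations (high-level typing rules) -/

inductive Label where
  | allGather (i : ℕ)
  | dynSlice (i : ℕ) (x : String)
  | allToAll (i j : ℕ)
  | allPermute
deriving DecidableEq

inductive OpKind where
  | gather | slice | toAll | permute
deriving DecidableEq

def Label.kind : Label → OpKind
  | .allGather _ => .gather
  | .dynSlice _ _ => .slice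
  | .allToAll _ _ => .toAll
  | .allPermute => .permute

inductive Step (H : Mesh) : Label → DType → DType → Prop where
  | allGather {τ : DType} (i : ℕ) {c : ℕ} {x : String} {xs : List String} {s n : ℕ}
      (hwf : H.WFType τ) (hx : H.hasAxis x n)
      (hi : τ[i]? = some ⟨c, x :: xs, s⟩) :
      Step H (.allGather i) τ (τ.set i ⟨c * n, xs, s⟩)
  | dynSlice {τ : DType} (i : ℕ) (x : String) {c : ℕ} {xs : List String} {s n : ℕ}
      (hwf : H.WFType τ) (hx : H.hasAxis x n) (hfresh : x ∉ typeAxes τ)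
      (hi : τ[i]? = some ⟨c * n, xs, s⟩) :
      Step H (.dynSlice i x) τ (τ.set i ⟨c, x :: xs, s⟩)
  | allToAll {τ : DType} (i j : ℕ) {ci : ℕ} {x : String} {xsi : List String} {si cj : ℕ}
      {xsj : List String} {sj n : ℕ}
      (hwf : H.WFType τ) (hij : i ≠ j) (hx : H.hasAxis x n)
      (hi : τ[i]? = some ⟨ci, x :: xsi, si⟩)
      (hj : τ[j]? = some ⟨cj, xsj, sj⟩)
      (hdvd : n ∣ cj) :
      Step H (.allToAll i j) τ ((τ.set i ⟨ci * n, xsi, si⟩).set j ⟨cj / n, x :: xsj, sj⟩)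
  | allPermute {τ₁ τ₂ : DType}
      (hwf1 : H.WFType τ₁) (hwf2 : H.WFType τ₂)
      (hl : localtype τ₁ = localtype τ₂) (hg : globaltype τ₁ = globaltype τ₂) :
      Step H .allPermute τ₁ τ₂

/-! ## Sequences of collective operations -/

inductive CSeq (H : Mesh) : DType → DType → Type where
  | nil (τ : DType) : CSeq H τ τ
  | cons {τ₁ τ₂ τ₃ : DType} (p : Label) (h : Step H p τ₁ τ₂) (s : CSeq H τ₂ τ₃) : CSeq H τ₁ τ₃

def CSeq.labels {H : Mesh} : {τ₁ τ₂ : DType} → CSeq H τ₁ τ₂ → List Label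
  | _, _, .nil _ => []
  | _, _, .cons p _ s => p :: s.labels

def CSeq.typesList {H : Mesh} : {τ₁ τ₂ : DType} → CSeq H τ₁ τ₂ → List DType
  | _, _, .nil τ => [τ]
  | τ, _, .cons _ _ s => τ :: s.typesList

/-- The height 𝔥 of a sequence: the maximum `localsize` over all types in it. -/
def CSeq.height {H : Mesh} {τ₁ τ₂ : DType} (s : CSeq H τ₁ τ₂) : ℕ :=
  (s.typesList.map localsize).foldr max 0

/-- Cost of a single step with source `σ₁` and target `σ₂`. -/
def stepCost (p : Label) (σ₁ σ₂ : DType) : ℕ :=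
  match p with
  | .allGather _ => localsize σ₂
  | .dynSlice _ _ => 0
  | .allToAll _ _ => localsize σ₁
  | .allPermute => localsize σ₁

def CSeq.cost {H : Mesh} : {τ₁ τ₂ : DType} → CSeq H τ₁ τ₂ → ℕ
  | _, _, .nil _ => 0
  | _, _, @CSeq.cons _ σ₁ σ₂ _ p _ s => stepCost p σ₁ σ₂ + s.cost

/-- Normal form: labels matched by `dynSlice* {allToAll | allPermute}* allGather*`. -/
def NormalFormK (ks : List OpKind) : Prop :=
  ∃ a b c : List OpKind, ks = a ++ b ++ c ∧
    (∀ k ∈ a, k = OpKind.slice) ∧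
    (∀ k ∈ b, k = OpKind.toAll ∨ k = OpKind.permute) ∧
    (∀ k ∈ c, k = OpKind.gather)

/-! ## Weak collectives -/

/-- Equivalence of base offset maps. -/
def bomEquiv (H : Mesh) (β₁ β₂ : BOM H) : Prop :=
  ∃ π : Equiv.Perm (IndexTuple H), β₂ = β₁ ∘ π

/-- The weak collective relation `⟦τ₁⟧_E ▶^p ⟦τ₂⟧_E`, represented on types. -/
def WeakStep (H : Mesh) (p : Label) (τ₁ τ₂ : DType) : Prop :=
  p ≠ Label.allPermute ∧ H.WFType τ₁ ∧ H.WFType τ₂ ∧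
  ∃ σ₁ σ₂ : DType, Step H p σ₁ σ₂ ∧
    bomEquiv H (typeOffset H σ₁) (typeOffset H τ₁) ∧
    bomEquiv H (typeOffset H σ₂) (typeOffset H τ₂)

inductive WkSeq (H : Mesh) : DType → DType → Type where
  | nil (τ : DType) : WkSeq H τ τ
  | cons {τ₁ τ₂ τ₃ : DType} (p : Label) (h : WeakStep H p τ₁ τ₂) (s : WkSeq H τ₂ τ₃) :
      WkSeq H τ₁ τ₃

def WkSeq.labels {H : Mesh} : {τ₁ τ₂ : DType} → WkSeq H τ₁ τ₂ → List Label
  | _, _, .nil _ => []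
  | _, _, .cons p _ s => p :: s.labels

def WkSeq.typesList {H : Mesh} : {τ₁ τ₂ : DType} → WkSeq H τ₁ τ₂ → List DType
  | _, _, .nil τ => [τ]
  | τ, _, .cons _ _ s => τ :: s.typesList

def WkSeq.height {H : Mesh} {τ₁ τ₂ : DType} (s : WkSeq H τ₁ τ₂) : ℕ :=
  (s.typesList.map localsize).foldr max 0

def WkSeq.cost {H : Mesh} : {τ₁ τ₂ : DType} → WkSeq H τ₁ τ₂ → ℕ
  | _, _, .nil _ => 0
  | _, _, @WkSeq.cons _ σ₁ σ₂ _ p _ s => stepCost p σ₁ σ₂ + s.cost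

/-! ## Low-level MPI-style collectives on device assignments -/

abbrev DevMap (H : Mesh) (D : Type) := IndexTuple H ≃ D

structure DevAssign (H : Mesh) (D : Type) where
  dmap : DevMap H D
  bom : BOM H

inductive LLabel where
  | allGather (x : String)
  | allToAll (x : String) (j : ℕ)
  | dynSlice (i : ℕ) (x : String)
  | allPermute
deriving DecidableEq

def LLabel.kind : LLabel → OpKind
  | .allGather _ => .gather
  | .allToAll _ _ => .toAll
  | .dynSlice _ _ => .slice
  | .allPermute => .permute

inductive LStep (H : Mesh) (D : Type) : LLabel → DevAssign H D → DevAssign H D → Type where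
  | gather (τ : DType) (i : ℕ) (c : ℕ) (ys : List String) (x : String) (xs : List String)
      (s n : ℕ) (φ φ' : DevMap H D)
      (hwf : H.WFType τ) (hx : H.hasAxis x n)
      (hi : τ[i]? = some ⟨c, ys ++ x :: xs, s⟩)
      (hmap : typeOffset H (τ.set i ⟨c, x :: (ys ++ xs), s⟩) ∘ ⇑φ'.symm
            = typeOffset H τ ∘ ⇑φ.symm) :
      LStep H D (.allGather x) ⟨φ, typeOffset H τ⟩
        ⟨φ', typeOffset H (τ.set i ⟨c * n, ys ++ xs, s⟩)⟩
  | toAll (τ : DType) (i j : ℕ) (ci : ℕ) (ys : List String) (x : String) (xs : List String)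
      (si cj : ℕ) (xsj : List String) (sj n : ℕ) (φ φ' : DevMap H D)
      (hwf : H.WFType τ) (hij : i ≠ j) (hx : H.hasAxis x n)
      (hi : τ[i]? = some ⟨ci, ys ++ x :: xs, si⟩)
      (hj : τ[j]? = some ⟨cj, xsj, sj⟩)
      (hdvd : n ∣ cj)
      (hmap : typeOffset H (τ.set i ⟨ci, x :: (ys ++ xs), si⟩) ∘ ⇑φ'.symm
            = typeOffset H τ ∘ ⇑φ.symm) :
      LStep H D (.allToAll x j) ⟨φ, typeOffset H τ⟩
        ⟨φ', typeOffset H ((τ.set i ⟨ci * n, ys ++ xs, si⟩).set j ⟨cj / n, x :: xsj, sj⟩)⟩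
  | slice (τ : DType) (i : ℕ) (x : String) (c : ℕ) (xs : List String) (s n : ℕ)
      (φ : DevMap H D)
      (hwf : H.WFType τ) (hx : H.hasAxis x n) (hfresh : x ∉ typeAxes τ)
      (hi : τ[i]? = some ⟨c * n, xs, s⟩) :
      LStep H D (.dynSlice i x) ⟨φ, typeOffset H τ⟩ ⟨φ, typeOffset H (τ.set i ⟨c, x :: xs, s⟩)⟩
  | permute (τ : DType) (ρ : Equiv.Perm (IndexTuple H)) (β' : BOM H)
      (φ φ' : DevMap H D) (π : Equiv.Perm D)
      (hwf : H.WFType τ)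
      (hmap : β' ∘ ⇑φ'.symm = (typeOffset H τ ∘ ⇑ρ) ∘ ⇑φ.symm ∘ ⇑π) :
      LStep H D .allPermute ⟨φ, typeOffset H τ ∘ ⇑ρ⟩ ⟨φ', β'⟩

def LStep.cost {H : Mesh} {D : Type} :
    {l : LLabel} → {a b : DevAssign H D} → LStep H D l a b → ℕ
  | _, _, _, .gather τ i c ys x xs s n .. => localsize (τ.set i ⟨c * n, ys ++ xs, s⟩)
  | _, _, _, .toAll τ .. => localsize τ
  | _, _, _, .slice .. => 0
  | _, _, _, .permute τ .. => localsize τ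

inductive LoSeq (H : Mesh) (D : Type) : DevAssign H D → DevAssign H D → Type where
  | nil (a : DevAssign H D) : LoSeq H D a a
  | cons {a b c : DevAssign H D} (l : LLabel) (st : LStep H D l a b) (s : LoSeq H D b c) :
      LoSeq H D a c

def LoSeq.labels {H : Mesh} {D : Type} : {a b : DevAssign H D} → LoSeq H D a b → List LLabel
  | _, _, .nil _ => []
  | _, _, .cons l _ s => l :: s.labels

def LoSeq.states {H : Mesh} {D : Type} : {a b : DevAssign H D} → LoSeq H D a b → List (DevAssign H D)
  | _, _, .nil a => [a]
  | a, _, .cons _ _ s => a :: s.states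

def LoSeq.cost {H : Mesh} {D : Type} : {a b : DevAssign H D} → LoSeq H D a b → ℕ
  | _, _, .nil _ => 0
  | _, _, .cons _ st s => st.cost + s.cost


lemma list_set_self {α} (l : List α) (i : ℕ) (a : α) (h : l[i]? = some a) : l.set i a = l := by
  induction l generalizing i with
  | nil => simp at h
  | cons b l ih =>
    cases i with
    | zero => simp_all
    | succ i => simp_all [List.set]

lemma dimOffset_mul (H : Mesh) (a b : ℕ) (xs : List String) (ι : String → ℕ) :
    dimOffset H (a * b) xs ι = a * dimOffset H b xs ι := by
  induction xs generalizing b with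
  | nil => simp [dimOffset]
  | cons x xs ih =>
    simp only [dimOffset]
    rw [mul_assoc a b (H.size x), ih]
    ring

lemma dimOffset_congr (H : Mesh) (c : ℕ) (xs : List String) (ι ι' : String → ℕ)
    (h : ∀ x ∈ xs, ι x = ι' x) : dimOffset H c xs ι = dimOffset H c xs ι' := by
  induction xs generalizing c with
  | nil => rfl
  | cons x xs ih =>
    simp only [dimOffset]
    rw [h x (by simp), ih _ (fun y hy => h y (by simp [hy]))]

lemma dimOffset_lt (H : Mesh) (xs : List String) (ι : String → ℕ)
    (hb : ∀ x ∈ xs, ι x < H.size x) :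
    dimOffset H 1 xs ι < (xs.map H.size).prod := by
  induction xs with
  | nil => simp [dimOffset]
  | cons x xs ih =>
    simp only [dimOffset, List.map_cons, List.prod_cons, one_mul]
    have h1 : ι x < H.size x := hb x (by simp)
    have h2 := ih (fun y hy => hb y (by simp [hy]))
    have : dimOffset H (H.size x) xs ι = H.size x * dimOffset H 1 xs ι := by
      conv_lhs => rw [← mul_one (H.size x)]
      rw [dimOffset_mul]
    rw [this]
    calc ι x + H.size x * dimOffset H 1 xs ι
        < H.size x * (dimOffset H 1 xs ι + 1) := by ring_nf; omega
      _ ≤ H.size x * (xs.map H.size).prod := Nat.mul_le_mul_left _ (by omega)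

def decode (H : Mesh) : List String → ℕ → String → ℕ
  | [], _, _ => 0
  | x :: xs, w, y => if y = x then w % H.size x else decode H xs (w / H.size x) y

lemma decode_support (H : Mesh) (xs : List String) (w : ℕ) (y : String) (hy : y ∉ xs) :
    decode H xs w y = 0 := by
  induction xs generalizing w with
  | nil => rfl
  | cons x xs ih =>
    simp only [decode]
    rw [if_neg (by simp at hy; exact hy.1), ih _ (by simp at hy; exact hy.2)]

lemma decode_lt (H : Mesh) (xs : List String) (w : ℕ) (y : String)
    (hxs : ∀ x ∈ xs, 1 ≤ H.size x) (hy : y ∈ xs) : decode H xs w y < H.size y := by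
  induction xs generalizing w with
  | nil => simp at hy
  | cons x xs ih =>
    simp only [decode]
    by_cases h : y = x
    · rw [if_pos h, h]; exact Nat.mod_lt _ (hxs x (by simp))
    · rw [if_neg h]
      exact ih _ (fun z hz => hxs z (by simp [hz])) (by simp at hy; tauto)

lemma encode_decode (H : Mesh) (xs : List String) (w : ℕ)
    (hnd : xs.Nodup) (hxs : ∀ x ∈ xs, 1 ≤ H.size x) (hw : w < (xs.map H.size).prod) :
    dimOffset H 1 xs (decode H xs w) = w := by
  induction xs generalizing w with
  | nil => simp [List.map_nil, List.prod_nil] at hw; simp [dimOffset, hw]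
  | cons x xs ih =>
    have hk : 1 ≤ H.size x := hxs x (by simp)
    simp only [dimOffset, one_mul]
    have hcongr : dimOffset H (H.size x) xs (decode H (x :: xs) w)
        = dimOffset H (H.size x) xs (decode H xs (w / H.size x)) := by
      apply dimOffset_congr
      intro y hy
      have hyx : y ≠ x := by
        rintro rfl; exact (List.nodup_cons.mp hnd).1 hy
      simp [decode, hyx]
    rw [hcongr]
    have hm : dimOffset H (H.size x) xs (decode H xs (w / H.size x))
        = H.size x * dimOffset H 1 xs (decode H xs (w / H.size x)) := by
      conv_lhs => rw [← mul_one (H.size x)]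
      rw [dimOffset_mul, mul_one]
    rw [hm]
    have hdiv : w / H.size x < (xs.map H.size).prod := by
      rw [Nat.div_lt_iff_lt_mul (by omega)]
      simpa [List.map_cons, List.prod_cons, mul_comm] using hw
    rw [ih _ (List.nodup_cons.mp hnd).2 (fun z hz => hxs z (by simp [hz])) hdiv]
    simp [decode, Nat.mod_add_div]

lemma decode_encode (H : Mesh) (xs : List String) (ι : String → ℕ)
    (hnd : xs.Nodup) (hb : ∀ x ∈ xs, ι x < H.size x) (y : String) (hy : y ∈ xs) :
    decode H xs (dimOffset H 1 xs ι) y = ι y := by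
  induction xs generalizing y with
  | nil => simp at hy
  | cons x xs ih =>
    have hk : ι x < H.size x := hb x (by simp)
    have henc : dimOffset H 1 (x :: xs) ι = ι x + H.size x * dimOffset H 1 xs ι := by
      simp only [dimOffset, one_mul]
      congr 1
      rw [← dimOffset_mul H (H.size x) 1 xs ι, mul_one]
    by_cases h : y = x
    · subst h
      simp only [decode, henc, if_true, eq_self_iff_true, ite_true]
      rw [Nat.add_mul_mod_self_left, Nat.mod_eq_of_lt hk]
    · simp only [decode, henc, if_neg h]
      have : (ι x + H.size x * dimOffset H 1 xs ι) / H.size x = dimOffset H 1 xs ι := by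
        rw [Nat.add_mul_div_left _ _ (by omega), Nat.div_eq_of_lt hk, zero_add]
      rw [this]
      exact ih (List.nodup_cons.mp hnd).2 (fun z hz => hb z (by simp [hz])) y
        (by simp at hy; tauto)

lemma mem_typeAxes {τ : DType} {x : String} : x ∈ typeAxes τ ↔ ∃ d ∈ τ, x ∈ d.axes := by
  induction τ with
  | nil => simp [typeAxes]
  | cons d τ ih => simp [typeAxes, ih]

lemma typeAxes_nodup {H : Mesh} {τ : DType} (h : H.WFType τ) : (typeAxes τ).Nodup := by
  obtain ⟨h1, h2⟩ := h
  induction τ with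
  | nil => simp [typeAxes]
  | cons d τ ih =>
    simp only [typeAxes]
    rw [List.nodup_append]
    refine ⟨(h1 d (by simp)).2.1, ih (fun e he => h1 e (by simp [he])) (List.pairwise_cons.mp h2).2, ?_⟩
    intro a ha b hb hab
    subst hab
    rw [mem_typeAxes] at hb
    obtain ⟨e, he, hae⟩ := hb
    exact (List.pairwise_cons.mp h2).1 e he a ha hae

lemma typeAxes_sub {H : Mesh} {τ : DType} (h : H.WFType τ) : ∀ x ∈ typeAxes τ, x ∈ H.axes := by
  intro x hx
  rw [mem_typeAxes] at hx
  obtain ⟨d, hd, hxd⟩ := hx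
  exact (h.1 d hd).2.2.1 x hxd

lemma typeAxes_prod {H : Mesh} {τ : DType} :
    ((typeAxes τ).map H.size).prod = (τ.map (fun d => (d.axes.map H.size).prod)).prod := by
  induction τ with
  | nil => simp [typeAxes]
  | cons d τ ih => simp [typeAxes, ih]

section Big
variable (H : Mesh) (τ : DType)

/-- Sizes product of dimension `i`. -/
def dimP (i : Fin τ.length) : ℕ := (((τ.get i).axes).map H.size).prod

def restSet : Finset String := H.axes \ (typeAxes τ).toFinset

abbrev PiU := ∀ x : {y // y ∈ restSet H τ}, Fin (H.size x.val)

variable {H τ}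

lemma lget_mem {α} (l : List α) (i : Fin l.length) : l.get i ∈ l := by
  have := l.get_mem i
  simpa using this

lemma wf_disj (hwf : H.WFType τ) {i j : Fin τ.length} (hij : i ≠ j) {y : String}
    (hy : y ∈ (τ.get i).axes) : y ∉ (τ.get j).axes := by
  have hp := hwf.2
  rw [List.pairwise_iff_getElem] at hp
  simp only [List.get_eq_getElem] at hy ⊢
  rcases lt_or_gt_of_ne (Fin.val_ne_of_ne hij) with h | h
  · exact hp i.val j.val i.isLt j.isLt h y hy
  · intro hj
    exact hp j.val i.val j.isLt i.isLt h y hj hy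

lemma get_mem_axes {i : Fin τ.length} {y : String} (hy : y ∈ (τ.get i).axes) :
    y ∈ typeAxes τ :=
  mem_typeAxes.mpr ⟨τ.get i, lget_mem τ i, hy⟩

lemma mem_typeAxes_iff_exists : ∀ {y : String}, y ∈ typeAxes τ ↔ ∃ i : Fin τ.length, y ∈ (τ.get i).axes := by
  intro y
  rw [mem_typeAxes]
  constructor
  · rintro ⟨d, hd, hyd⟩
    obtain ⟨i, rfl⟩ := List.mem_iff_get.mp hd
    exact ⟨i, hyd⟩
  · rintro ⟨i, hy⟩
    exact ⟨τ.get i, lget_mem τ i, hy⟩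

noncomputable def bigEquiv (hwf : H.WFType τ) :
    IndexTuple H ≃ (∀ i : Fin τ.length, Fin (dimP H τ i)) × PiU H τ where
  toFun ι :=
    ⟨fun i => ⟨dimOffset H 1 (τ.get i).axes ι.val,
        dimOffset_lt H _ _ (fun x hx => (ι.2 x).1 ((hwf.1 _ (lget_mem τ i)).2.2.1 x hx))⟩,
      fun x => ⟨ι.val x.val, (ι.2 x.val).1 (Finset.mem_sdiff.mp x.2).1⟩⟩
  invFun q :=
    ⟨fun y => (if h : y ∈ restSet H τ then (q.2 ⟨y, h⟩ : ℕ) else 0)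
        + ∑ i : Fin τ.length, decode H (τ.get i).axes (q.1 i) y, by
      intro y
      beta_reduce
      constructor
      · intro hy
        by_cases hA : y ∈ typeAxes τ
        · obtain ⟨i, hyi⟩ := mem_typeAxes_iff_exists.mp hA
          rw [dif_neg (by simp [restSet, hA]),
            Finset.sum_eq_single_of_mem i (Finset.mem_univ i)
              (fun j _ hj => decode_support H _ _ _ (wf_disj hwf (Ne.symm hj) hyi)), zero_add]
          exact decode_lt H _ _ _
            (fun z hz => H.size_pos z ((hwf.1 _ (lget_mem τ i)).2.2.1 z hz)) hyi
        · rw [dif_pos (by simp [restSet, hy, hA]),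
            Finset.sum_eq_zero (fun j _ => decode_support H _ _ _
              (fun hj => hA (get_mem_axes hj))), add_zero]
          exact (q.2 ⟨y, by simp [restSet, hy, hA]⟩).2
      · intro hy
        rw [dif_neg (by simp [restSet, hy]),
          Finset.sum_eq_zero (fun j _ => decode_support H _ _ _
            (fun hj => hy ((hwf.1 _ (lget_mem τ j)).2.2.1 y hj))), add_zero]⟩
  left_inv ι := by
    apply Subtype.ext
    funext y
    simp only
    by_cases hA : y ∈ typeAxes τ
    · obtain ⟨i, hyi⟩ := mem_typeAxes_iff_exists.mp hA
      rw [dif_neg (by simp [restSet, hA]),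
        Finset.sum_eq_single_of_mem i (Finset.mem_univ i)
          (fun j _ hj => decode_support H _ _ _ (wf_disj hwf (Ne.symm hj) hyi)), zero_add]
      exact decode_encode H _ _ (hwf.1 _ (lget_mem τ i)).2.1
        (fun z hz => (ι.2 z).1 ((hwf.1 _ (lget_mem τ i)).2.2.1 z hz)) y hyi
    · rw [Finset.sum_eq_zero (fun j _ => decode_support H _ _ _
        (fun hj => hA (get_mem_axes hj))), add_zero]
      by_cases hy : y ∈ H.axes
      · rw [dif_pos (by simp [restSet, hy, hA])]
      · rw [dif_neg (by simp [restSet, hy])]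
        exact ((ι.2 y).2 hy).symm
  right_inv q := by
    refine Prod.ext ?_ ?_
    · funext i
      apply Fin.ext
      simp only
      rw [dimOffset_congr H 1 (τ.get i).axes _ (fun y => decode H (τ.get i).axes (q.1 i) y)
        (by
          intro y hy
          rw [dif_neg (by simp [restSet, get_mem_axes hy]),
            Finset.sum_eq_single_of_mem i (Finset.mem_univ i)
              (fun j _ hj => decode_support H _ _ _ (wf_disj hwf (Ne.symm hj) hy)), zero_add])]
      exact encode_decode H _ _ (hwf.1 _ (lget_mem τ i)).2.1
        (fun z hz => H.size_pos z ((hwf.1 _ (lget_mem τ i)).2.2.1 z hz)) (q.1 i).2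
    · funext x
      apply Fin.ext
      simp only
      rw [dif_pos x.2, Finset.sum_eq_zero (fun j _ => decode_support H _ _ _
        (fun hj => (Finset.mem_sdiff.mp x.2).2 (by
          simp only [List.mem_toFinset]
          exact get_mem_axes hj))), add_zero]
end Big

lemma typeOffset_ofFn {H : Mesh} {τ : DType} (hwf : H.WFType τ) (ι : IndexTuple H) :
    typeOffset H τ ι
      = List.ofFn (fun i : Fin τ.length => (τ.get i).tile * (((bigEquiv hwf) ι).1 i : ℕ)) := by
  apply List.ext_getElem (by simp [typeOffset])
  intro k h1 h2
  have hk : k < τ.length := by simpa [typeOffset] using h1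
  simp only [typeOffset, List.getElem_map, List.getElem_ofFn, bigEquiv, Equiv.coe_fn_mk,
    List.get_eq_getElem]
  rw [← dimOffset_mul H (τ[k]).tile 1, mul_one]

lemma card_PiU (H : Mesh) (τ : DType) :
    Fintype.card (PiU H τ) = ∏ x ∈ restSet H τ, H.size x := by
  rw [Fintype.card_pi]
  simp only [Fintype.card_fin]
  exact Finset.prod_coe_sort (restSet H τ) (fun x => H.size x)

lemma prod_restSet {H : Mesh} {τ : DType} (hwf : H.WFType τ) :
    (∏ x ∈ restSet H τ, H.size x) * ((typeAxes τ).map H.size).prod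
      = ∏ x ∈ H.axes, H.size x := by
  have hsub : (typeAxes τ).toFinset ⊆ H.axes := by
    intro x hx
    exact typeAxes_sub hwf x (List.mem_toFinset.mp hx)
  have := Finset.prod_sdiff (f := H.size) hsub
  rw [← this, restSet]
  congr 1
  rw [List.prod_toFinset H.size (typeAxes_nodup hwf)]

lemma exists_perm (H : Mesh) {τ₁ τ₂ : DType} (hwf1 : H.WFType τ₁) (hwf2 : H.WFType τ₂)
    (hl : τ₁.map Dim.tile = τ₂.map Dim.tile) (hg : τ₁.map Dim.global = τ₂.map Dim.global) :
    ∃ σ : Equiv.Perm (IndexTuple H), ∀ ι, typeOffset H τ₁ (σ ι) = typeOffset H τ₂ ι := by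
  have hlen : τ₂.length = τ₁.length := by
    have := congrArg List.length hl
    simpa using this.symm
  have htile : ∀ (k : ℕ) (h1 : k < τ₁.length) (h2 : k < τ₂.length),
      (τ₁[k]).tile = (τ₂[k]).tile := by
    intro k h1 h2
    have := congrArg (fun l => l[k]?) hl
    simpa [List.getElem?_map, List.getElem?_eq_getElem, h1, h2] using this
  have hglob : ∀ (k : ℕ) (h1 : k < τ₁.length) (h2 : k < τ₂.length),
      (τ₁[k]).global = (τ₂[k]).global := by
    intro k h1 h2
    have := congrArg (fun l => l[k]?) hg
    simpa [List.getElem?_map, List.getElem?_eq_getElem, h1, h2] using this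
  have hP : ∀ (k : ℕ) (h1 : k < τ₁.length) (h2 : k < τ₂.length),
      (((τ₁[k]).axes).map H.size).prod = (((τ₂[k]).axes).map H.size).prod := by
    intro k h1 h2
    have w1 := (hwf1.1 (τ₁[k]) (List.getElem_mem h1))
    have w2 := (hwf2.1 (τ₂[k]) (List.getElem_mem h2))
    have e1 := w1.2.2.2
    have e2 := w2.2.2.2
    rw [htile k h1 h2] at e1
    rw [hglob k h1 h2] at e1
    exact Nat.eq_of_mul_eq_mul_left (lt_of_lt_of_le Nat.zero_lt_one w2.1) (e1.trans e2.symm)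
  have hprodA : ((typeAxes τ₁).map H.size).prod = ((typeAxes τ₂).map H.size).prod := by
    rw [typeAxes_prod, typeAxes_prod]
    congr 1
    apply List.ext_getElem (by simpa using hlen.symm)
    intro k h1 h2
    simp only [List.getElem_map]
    exact hP k (by simpa using h1) (by simpa using h2)
  have hposA : 0 < ((typeAxes τ₁).map H.size).prod := by
    apply List.prod_pos
    intro a ha
    simp only [List.mem_map] at ha
    obtain ⟨x, hx, rfl⟩ := ha
    exact H.size_pos x (typeAxes_sub hwf1 x hx)
  have hcard : Fintype.card (PiU H τ₂) = Fintype.card (PiU H τ₁) := by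
    rw [card_PiU, card_PiU]
    have e1 := prod_restSet hwf1
    have e2 := prod_restSet hwf2
    rw [← hprodA] at e2
    apply Nat.eq_of_mul_eq_mul_right hposA
    rw [e1, e2]
  have hP' : ∀ i : Fin τ₂.length, dimP H τ₂ i = dimP H τ₁ (finCongr hlen i) := by
    intro i
    simp only [dimP, List.get_eq_getElem, finCongr_apply, Fin.coe_cast]
    exact (hP i.val (hlen ▸ i.isLt) i.isLt).symm
  let h₁ : Fin τ₂.length ≃ Fin τ₁.length := finCongr hlen
  let mid : ((∀ i : Fin τ₂.length, Fin (dimP H τ₂ i)) × PiU H τ₂)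
      ≃ ((∀ i : Fin τ₁.length, Fin (dimP H τ₁ i)) × PiU H τ₁) :=
    Equiv.prodCongr (Equiv.piCongr (W := fun i => Fin (dimP H τ₂ i))
      (Z := fun j => Fin (dimP H τ₁ j)) h₁ (fun i => finCongr (hP' i)))
      (Fintype.equivOfCardEq hcard)
  refine ⟨(bigEquiv hwf2).trans (mid.trans (bigEquiv hwf1).symm), ?_⟩
  intro ι
  rw [typeOffset_ofFn hwf1, typeOffset_ofFn hwf2]
  simp only [Equiv.trans_apply, Equiv.apply_symm_apply]
  rw [List.ofFn_congr hlen.symm]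
  congr 1
  funext i
  have hmid : (mid ((bigEquiv hwf2) ι)).1 (h₁ i)
      = finCongr (hP' i) (((bigEquiv hwf2) ι).1 i) := by
    simp only [mid, Equiv.prodCongr_apply, Prod.map_fst]
    exact Equiv.piCongr_apply_apply (W := fun i => Fin (dimP H τ₂ i))
      (Z := fun j => Fin (dimP H τ₁ j)) h₁ (fun i => finCongr (hP' i)) _ i
  have hcast : Fin.cast hlen i = h₁ i := rfl
  rw [hcast, hmid]
  simp only [finCongr_apply, Fin.coe_cast, List.get_eq_getElem, h₁]
  rw [htile i.val (by simpa using (Fin.cast hlen i).isLt) i.isLt]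

/-- Every high-level collective operation can be implemented by a low-level collective
without changing the device map. -/
theorem stmt18 (H : Mesh) (D : Type) (p : Label) (τ₁ τ₂ : DType)
    (h : Step H p τ₁ τ₂) (φ : DevMap H D) :
    ∃ l : LLabel, l.kind = p.kind ∧
      Nonempty (LStep H D l ⟨φ, typeOffset H τ₁⟩ ⟨φ, typeOffset H τ₂⟩) := by
  cases h with
  | @allGather _ i c x xs s n hwf hx hi =>
    refine ⟨.allGather x, rfl, ⟨?_⟩⟩
    have hset : τ₁.set i ⟨c, x :: xs, s⟩ = τ₁ := list_set_self _ _ _ hi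
    exact LStep.gather τ₁ i c [] x xs s n φ φ hwf hx hi
      (by rw [show (⟨c, x :: ([] ++ xs), s⟩ : Dim) = ⟨c, x :: xs, s⟩ from rfl, hset])
  | @dynSlice _ i x c xs s n hwf hx hfresh hi =>
    exact ⟨.dynSlice i x, rfl, ⟨LStep.slice τ₁ i x c xs s n φ hwf hx hfresh hi⟩⟩
  | @allToAll _ i j ci x xsi si cj xsj sj n hwf hij hx hi hj hdvd =>
    refine ⟨.allToAll x j, rfl, ⟨?_⟩⟩
    have hset : τ₁.set i ⟨ci, x :: xsi, si⟩ = τ₁ := list_set_self _ _ _ hi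
    exact LStep.toAll τ₁ i j ci [] x xsi si cj xsj sj n φ φ hwf hij hx hi hj hdvd
      (by rw [show (⟨ci, x :: ([] ++ xsi), si⟩ : Dim) = ⟨ci, x :: xsi, si⟩ from rfl, hset])
  | @allPermute _ _ hwf1 hwf2 hl hg =>
    obtain ⟨σ, hσ⟩ := exists_perm H hwf1 hwf2 hl hg
    refine ⟨.allPermute, rfl, ⟨?_⟩⟩
    have hmap : typeOffset H τ₂ ∘ ⇑φ.symm
        = (typeOffset H τ₁ ∘ ⇑(Equiv.refl (IndexTuple H)))
          ∘ ⇑φ.symm ∘ ⇑((φ.symm.trans σ).trans φ) := by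
      funext d
      simp only [Function.comp_apply, Equiv.trans_apply, Equiv.refl_apply,
        Equiv.symm_apply_apply]
      exact (hσ (φ.symm d)).symm
    exact LStep.permute τ₁ (Equiv.refl (IndexTuple H)) (typeOffset H τ₂) φ φ
      ((φ.symm.trans σ).trans φ) hwf1 hmap
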